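/- Let H be a finite-dimensional Hopf algebra over a field k and let g ∈ H be a grouplike element. Then the space L_g = { φ ∈ H* : (id ⊗ φ)(Δ(a)) = φ(a)·g for all a ∈ H } of left g-cointegrals is one-dimensional over k. -/

import Mathlib

open scoped TensorProduct
open Coalgebra HopfAlgebra LinearMap

noncomputable section

/-- An element `g` of a Hopf algebra is grouplike if `Δ(g) = g ⊗ g` and `ε(g) = 1`. -/
def IsGrouplike (k H : Type) [Field k] [Ring H] [HopfAlgebra k H] (g : H) : Prop :=
  Coalgebra.comul (R := k) g = g ⊗ₜ[k] g ∧ Coalgebra.counit (R := k) g = 1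

/-- The map `H ⊗ H → H`, `x ⊗ y ↦ φ(y) • x`, i.e. `(id ⊗ φ)` followed by `H ⊗ k ≅ H`. -/
noncomputable def idTens (k H : Type) [Field k] [Ring H] [Algebra k H]
    (φ : H →ₗ[k] k) : H ⊗[k] H →ₗ[k] H :=
  (TensorProduct.rid k H).toLinearMap ∘ₗ (LinearMap.lTensor H φ)

/-- The space `L_g` of left `g`-cointegrals on a Hopf algebra:
all `φ ∈ H*` with `(id ⊗ φ)(Δ(a)) = φ(a) • g` for all `a`. -/
noncomputable def leftCointegrals (k H : Type) [Field k] [Ring H] [HopfAlgebra k H]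
    (g : H) : Submodule k (H →ₗ[k] k) where
  carrier := {φ | ∀ a : H, idTens k H φ (Coalgebra.comul (R := k) a) = φ a • g}
  add_mem' := by
    intro φ ψ hφ hψ a
    simp only [idTens, LinearMap.comp_apply] at *
    rw [LinearMap.lTensor_add, LinearMap.add_apply, map_add, hφ a, hψ a,
      LinearMap.add_apply, add_smul]
  zero_mem' := by
    intro a
    simp [idTens]
  smul_mem' := by
    intro c φ hφ a
    simp only [idTens, LinearMap.comp_apply] at *
    rw [LinearMap.lTensor_smul, LinearMap.smul_apply, map_smul, hφ a,
      LinearMap.smul_apply, smul_assoc]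


namespace LS

variable {k H : Type} [Field k] [Ring H] [HopfAlgebra k H]

lemma sum_counit_smul' {C : Type} [AddCommGroup C] [Module k C] [Coalgebra k C]
    {a : C} {ι_r : Type*} (r : Repr k a ι_r) :
    ∑ i ∈ r.index, counit (R := k) (r.left i) • r.right i = a := by
  have h := congrArg (TensorProduct.lid k C) (sum_counit_tmul_eq r)
  rw [map_sum] at h
  simpa using h

lemma sum_smul_counit' {C : Type} [AddCommGroup C] [Module k C] [Coalgebra k C]
    {a : C} {ι_r : Type*} (r : Repr k a ι_r) :
    ∑ i ∈ r.index, counit (R := k) (r.right i) • r.left i = a := by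
  have h := congrArg (TensorProduct.rid k C) (sum_tmul_counit_eq r)
  rw [map_sum] at h
  simpa using h

/-- comultiplication of a product, in terms of representations of the factors -/
lemma comul_mul_repr {a b : H} {ι_ra : Type*} (ra : Repr k a ι_ra) {ι_rb : Type*} (rb : Repr k b ι_rb) :
    comul (R := k) (a * b) = ∑ i ∈ ra.index, ∑ j ∈ rb.index,
      (ra.left i * rb.left j) ⊗ₜ[k] (ra.right i * rb.right j) := by
  rw [Bialgebra.comul_mul (R := k) a b, ← ra.eq, ← rb.eq, Finset.sum_mul_sum]
  simp [Algebra.TensorProduct.tmul_mul_tmul]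

/-- antipode axiom (`id * S = uε`) for a product -/
lemma sum_mul_antipode_mul_repr {a b : H} {ι_ra : Type*} (ra : Repr k a ι_ra) {ι_rb : Type*} (rb : Repr k b ι_rb) :
    ∑ i ∈ ra.index, ∑ j ∈ rb.index,
      (ra.left i * rb.left j) * antipode (R := k) (ra.right i * rb.right j)
    = algebraMap k H (counit (R := k) a * counit (R := k) b) := by
  have h := mul_antipode_lTensor_comul_apply (R := k) (a := a * b)
  rw [comul_mul_repr ra rb] at h
  simpa [map_sum, Bialgebra.counit_mul] using h

/-- antipode axiom (`S * id = uε`) for a product -/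
lemma sum_antipode_mul_mul_repr {a b : H} {ι_ra : Type*} (ra : Repr k a ι_ra) {ι_rb : Type*} (rb : Repr k b ι_rb) :
    ∑ i ∈ ra.index, ∑ j ∈ rb.index,
      antipode (R := k) (ra.left i * rb.left j) * (ra.right i * rb.right j)
    = algebraMap k H (counit (R := k) a * counit (R := k) b) := by
  have h := mul_antipode_rTensor_comul_apply (R := k) (a := a * b)
  rw [comul_mul_repr ra rb] at h
  simpa [map_sum, Bialgebra.counit_mul] using h

lemma comul_one' : comul (R := k) (1 : H) = (1 : H) ⊗ₜ[k] (1 : H) := by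
  rw [← (Algebra.TensorProduct.one_def)]; exact map_one (Bialgebra.comulAlgHom k H)

def oneRepr : Repr k (1 : H) ℕ where
  index := ({0} : Finset ℕ)
  left := fun _ => 1
  right := fun _ => 1
  eq := by simp [comul_one', Algebra.TensorProduct.one_def]

lemma antipode_one' : antipode (R := k) (1 : H) = 1 := by
  have := sum_mul_antipode_eq_algebraMap_counit (R := k) (oneRepr (H := H))
  simpa [oneRepr] using this

section Conv

variable {C B : Type} [AddCommGroup C] [Module k C] [Coalgebra k C]
  [Ring B] [Algebra k B]

/-- convolution product on Hom(C, B) -/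
def conv (f g : C →ₗ[k] B) : C →ₗ[k] B :=
  LinearMap.mul' k B ∘ₗ TensorProduct.map f g ∘ₗ comul

/-- convolution unit -/
def cunit : C →ₗ[k] B := Algebra.linearMap k B ∘ₗ counit

lemma conv_repr (f g : C →ₗ[k] B) {a : C} {ι_r : Type*} (r : Repr k a ι_r) :
    conv f g a = ∑ i ∈ r.index, f (r.left i) * g (r.right i) := by
  simp only [conv, comp_apply, ← r.eq, map_sum, TensorProduct.map_tmul, mul'_apply]

lemma conv_assoc (f g h : C →ₗ[k] B) : conv (conv f g) h = conv f (conv g h) := by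
  ext a
  set r := Repr.arbitrary k a with hr
  set r1 := fun i => Repr.arbitrary k (r.left i)
  set r2 := fun i => Repr.arbitrary k (r.right i)
  have key := congrArg
    (LinearMap.mul' k B ∘ₗ TensorProduct.map f (LinearMap.mul' k B ∘ₗ TensorProduct.map g h))
    (sum_tmul_tmul_eq r r1 r2)
  simp only [map_sum, TensorProduct.map_tmul, mul'_apply, comp_apply] at key
  calc conv (conv f g) h a
      = ∑ i ∈ r.index, conv f g (r.left i) * h (r.right i) := conv_repr _ _ r
    _ = ∑ i ∈ r.index, ∑ j ∈ (r1 i).index,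
          f ((r1 i).left j) * (g ((r1 i).right j) * h (r.right i)) := by
        refine Finset.sum_congr rfl fun i _ => ?_
        rw [conv_repr f g (r1 i), Finset.sum_mul]
        exact Finset.sum_congr rfl fun j _ => mul_assoc _ _ _
    _ = ∑ i ∈ r.index, ∑ j ∈ (r2 i).index,
          f (r.left i) * (g ((r2 i).left j) * h ((r2 i).right j)) := key
    _ = conv f (conv g h) a := by
        rw [conv_repr f (conv g h) r]
        refine Finset.sum_congr rfl fun i _ => ?_
        rw [conv_repr g h (r2 i), Finset.mul_sum]

lemma conv_cunit_left (f : C →ₗ[k] B) : conv cunit f = f := by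
  ext a
  rw [conv_repr cunit f (Repr.arbitrary k a)]
  simp only [cunit, comp_apply, Algebra.linearMap_apply, ← Algebra.smul_def]
  simp_rw [← map_smul]
  rw [← map_sum, sum_counit_smul']

lemma conv_cunit_right (f : C →ₗ[k] B) : conv f cunit = f := by
  ext a
  rw [conv_repr f cunit (Repr.arbitrary k a)]
  simp only [cunit, comp_apply, Algebra.linearMap_apply]
  have : ∀ i ∈ (Repr.arbitrary k a).index,
      f ((Repr.arbitrary k a).left i) * algebraMap k B (counit ((Repr.arbitrary k a).right i))
      = counit (R := k) ((Repr.arbitrary k a).right i) • f ((Repr.arbitrary k a).left i) := by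
    intro i _
    rw [← Algebra.commutes, ← Algebra.smul_def]
  rw [Finset.sum_congr rfl this]
  simp_rw [← map_smul]
  rw [← map_sum, sum_smul_counit']

lemma conv_inv_unique {a f g : C →ₗ[k] B} (hf : conv a f = cunit) (hg : conv g a = cunit) :
    f = g := by
  have h1 : conv g (conv a f) = g := by rw [hf, conv_cunit_right]
  rw [← conv_assoc, hg, conv_cunit_left] at h1
  exact h1

end Conv

section Antihom

variable {k H : Type} [Field k] [Ring H] [HopfAlgebra k H]

lemma comul_tmul (a b : H) : comul (R := k) (a ⊗ₜ[k] b) =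
    TensorProduct.tensorTensorTensorComm k H H H H
      (TensorProduct.map comul comul (a ⊗ₜ b)) := rfl

lemma counit_tmul (a b : H) :
    counit (R := k) (a ⊗ₜ[k] b) = counit (R := k) a * counit (R := k) b := by
  simp [TensorProduct.counit_tmul, mul_comm]

/-- expansion of convolution on the tensor-square coalgebra -/
lemma conv_tmul (f g : H ⊗[k] H →ₗ[k] H) (a b : H) {ι_ra : Type*} {ra : Repr k a ι_ra} {ι_rb : Type*} {rb : Repr k b ι_rb} :
    conv f g (a ⊗ₜ[k] b) = ∑ i ∈ ra.index, ∑ j ∈ rb.index,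
      f (ra.left i ⊗ₜ rb.left j) * g (ra.right i ⊗ₜ rb.right j) := by
  simp only [conv, comp_apply, comul_tmul, TensorProduct.map_tmul]
  rw [← ra.eq, ← rb.eq]
  simp only [TensorProduct.sum_tmul, TensorProduct.tmul_sum, map_sum,
    TensorProduct.tensorTensorTensorComm_tmul, TensorProduct.map_tmul, mul'_apply]
  exact Finset.sum_comm

theorem antipode_mul' (a b : H) :
    antipode (R := k) (a * b) = antipode (R := k) b * antipode (R := k) a := by
  set f : H ⊗[k] H →ₗ[k] H := antipode (R := k) ∘ₗ LinearMap.mul' k H with hf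
  set g : H ⊗[k] H →ₗ[k] H := LinearMap.mul' k H ∘ₗ
    TensorProduct.map (antipode (R := k)) (antipode (R := k)) ∘ₗ
    (TensorProduct.comm k H H).toLinearMap with hgdef
  have h1 : conv (LinearMap.mul' k H) f = cunit := by
    apply TensorProduct.ext'
    intro a b
    rw [conv_tmul (ra := Repr.arbitrary k a) (rb := Repr.arbitrary k b)]
    simp only [hf, comp_apply, mul'_apply, TensorProduct.map_tmul]
    rw [sum_mul_antipode_mul_repr (Repr.arbitrary k a) (Repr.arbitrary k b)]
    simp [cunit, counit_tmul, -TensorProduct.counit_tmul]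
  have h2 : conv g (LinearMap.mul' k H) = cunit := by
    apply TensorProduct.ext'
    intro a b
    rw [conv_tmul (ra := Repr.arbitrary k a) (rb := Repr.arbitrary k b)]
    simp only [hgdef, comp_apply, mul'_apply, TensorProduct.map_tmul, LinearEquiv.coe_coe,
      TensorProduct.comm_tmul]
    have e1 : ∀ i ∈ (Repr.arbitrary k a).index, ∀ j ∈ (Repr.arbitrary k b).index,
        antipode (R := k) ((Repr.arbitrary k b).left j) *
          antipode (R := k) ((Repr.arbitrary k a).left i) *
          ((Repr.arbitrary k a).right i * (Repr.arbitrary k b).right j)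
        = antipode (R := k) ((Repr.arbitrary k b).left j) *
          ((antipode (R := k) ((Repr.arbitrary k a).left i) * (Repr.arbitrary k a).right i) *
            (Repr.arbitrary k b).right j) := by
      intro i _ j _; simp only [mul_assoc]
    calc ∑ i ∈ (Repr.arbitrary k a).index, ∑ j ∈ (Repr.arbitrary k b).index,
          antipode (R := k) ((Repr.arbitrary k b).left j) *
            antipode (R := k) ((Repr.arbitrary k a).left i) *
            ((Repr.arbitrary k a).right i * (Repr.arbitrary k b).right j)
        = ∑ j ∈ (Repr.arbitrary k b).index,
            antipode (R := k) ((Repr.arbitrary k b).left j) *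
            ((∑ i ∈ (Repr.arbitrary k a).index,
              antipode (R := k) ((Repr.arbitrary k a).left i) * (Repr.arbitrary k a).right i) *
              (Repr.arbitrary k b).right j) := by
          rw [Finset.sum_comm]
          refine Finset.sum_congr rfl fun j hj => ?_
          rw [Finset.sum_mul, Finset.mul_sum]
          exact Finset.sum_congr rfl fun i hi => e1 i hi j hj
      _ = cunit (a ⊗ₜ[k] b) := by
          rw [sum_antipode_mul_eq_algebraMap_counit (R := k) (Repr.arbitrary k a)]
          simp only [cunit, comp_apply, Algebra.linearMap_apply, counit_tmul]
          have e2 : ∀ j ∈ (Repr.arbitrary k b).index,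
              antipode (R := k) ((Repr.arbitrary k b).left j) *
                (algebraMap k H (counit (R := k) a) * (Repr.arbitrary k b).right j)
              = algebraMap k H (counit (R := k) a) *
                (antipode (R := k) ((Repr.arbitrary k b).left j) *
                  (Repr.arbitrary k b).right j) := by
            intro j _
            rw [← mul_assoc, ← Algebra.commutes, mul_assoc]
          rw [Finset.sum_congr rfl e2, ← Finset.mul_sum,
            sum_antipode_mul_eq_algebraMap_counit (R := k) (Repr.arbitrary k b), ← map_mul]
  have hfg := conv_inv_unique h1 h2
  have := congrArg (fun F : H ⊗[k] H →ₗ[k] H => F (a ⊗ₜ[k] b)) hfg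
  simpa [hf, hgdef] using this

/-- the key middle-collapse identity: `∑ S(y₁)y₂ ⊗ y₃ = 1 ⊗ y` -/
lemma claimB {y : H} {ι_ry : Type*} (ry : Repr k y ι_ry) :
    ∑ m ∈ ry.index, ((antipode (R := k) (ry.left m)) ⊗ₜ[k] (1 : H)) * comul (ry.right m)
    = (1 : H) ⊗ₜ[k] y := by
  set r1 := fun m => Repr.arbitrary k (ry.left m)
  set r2 := fun m => Repr.arbitrary k (ry.right m)
  have key := congrArg
    (LinearMap.rTensor H (LinearMap.mul' k H ∘ₗ TensorProduct.map (antipode (R := k)) LinearMap.id)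
      ∘ₗ (TensorProduct.assoc k H H H).symm.toLinearMap)
    (sum_tmul_tmul_eq ry r1 r2)
  simp only [map_sum, comp_apply, LinearEquiv.coe_coe, TensorProduct.assoc_symm_tmul,
    LinearMap.rTensor_tmul, TensorProduct.map_tmul, mul'_apply, id_coe, _root_.id] at key
  have lhs : ∑ m ∈ ry.index, ∑ j ∈ (r1 m).index,
      (antipode (R := k) ((r1 m).left j) * (r1 m).right j) ⊗ₜ[k] ry.right m
      = (1 : H) ⊗ₜ[k] y := by
    have e : ∀ m ∈ ry.index, ∑ j ∈ (r1 m).index,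
        (antipode (R := k) ((r1 m).left j) * (r1 m).right j) ⊗ₜ[k] ry.right m
        = (1:H) ⊗ₜ[k] (counit (R := k) (ry.left m) • ry.right m) := by
      intro m _
      rw [← TensorProduct.sum_tmul, sum_antipode_mul_eq_algebraMap_counit (R := k) (r1 m),
        Algebra.algebraMap_eq_smul_one, TensorProduct.smul_tmul]
    rw [Finset.sum_congr rfl e, ← TensorProduct.tmul_sum, sum_counit_smul']
  rw [key] at lhs
  rw [← lhs]
  refine Finset.sum_congr rfl fun m _ => ?_
  rw [← (r2 m).eq, Finset.mul_sum]
  refine Finset.sum_congr rfl fun n _ => ?_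
  rw [Algebra.TensorProduct.tmul_mul_tmul, one_mul]

/-- anticomultiplicativity of the antipode, elementwise -/
lemma comul_antipode' {a : H} {ι_r : Type*} (r : Repr k a ι_r) :
    comul (R := k) (antipode (R := k) a)
    = ∑ i ∈ r.index, antipode (R := k) (r.right i) ⊗ₜ[k] antipode (R := k) (r.left i) := by
  set f : H →ₗ[k] H ⊗[k] H := comul ∘ₗ antipode (R := k) with hfdef
  set g : H →ₗ[k] H ⊗[k] H := (TensorProduct.comm k H H).toLinearMap ∘ₗ
    TensorProduct.map (antipode (R := k)) (antipode (R := k)) ∘ₗ comul with hgdef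
  have h1 : conv (comul (R := k) (A := H)) f = cunit := by
    ext a
    rw [conv_repr _ _ (Repr.arbitrary k a)]
    simp only [hfdef, comp_apply]
    have e : ∀ i ∈ (Repr.arbitrary k a).index,
        comul (R := k) ((Repr.arbitrary k a).left i) *
          comul (R := k) (antipode (R := k) ((Repr.arbitrary k a).right i))
        = comul (R := k) ((Repr.arbitrary k a).left i *
            antipode (R := k) ((Repr.arbitrary k a).right i)) := by
      intro i _; rw [Bialgebra.comul_mul]
    rw [Finset.sum_congr rfl e, ← map_sum, sum_mul_antipode_eq_algebraMap_counit (R := k) (Repr.arbitrary k a)]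
    simp [cunit, Bialgebra.comul_algebraMap]
  have h2 : conv g (comul (R := k) (A := H)) = cunit := by
    ext a
    rw [conv_repr _ _ (Repr.arbitrary k a)]
    set r0 := Repr.arbitrary k a
    set r1 := fun m => Repr.arbitrary k (r0.left m)
    set r2 := fun m => Repr.arbitrary k (r0.right m)
    have key := congrArg
      (LinearMap.mul' k (H ⊗[k] H) ∘ₗ
        TensorProduct.map
          (TensorProduct.map (antipode (R := k)) (antipode (R := k)) ∘ₗ
            (TensorProduct.comm k H H).toLinearMap) comul
        ∘ₗ (TensorProduct.assoc k H H H).symm.toLinearMap)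
      (sum_tmul_tmul_eq r0 r1 r2)
    simp only [map_sum, comp_apply, LinearEquiv.coe_coe, TensorProduct.assoc_symm_tmul,
      TensorProduct.map_tmul, TensorProduct.comm_tmul, mul'_apply] at key
    have lhs : ∑ i ∈ r0.index, g (r0.left i) * comul (R := k) (r0.right i)
        = ∑ i ∈ r0.index, ∑ j ∈ (r1 i).index,
          (antipode (R := k) ((r1 i).right j) ⊗ₜ[k] antipode (R := k) ((r1 i).left j)) *
            comul (R := k) (r0.right i) := by
      refine Finset.sum_congr rfl fun i _ => ?_
      rw [hgdef]
      simp only [comp_apply, LinearEquiv.coe_coe]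
      rw [← (r1 i).eq]
      simp only [map_sum, TensorProduct.map_tmul, TensorProduct.comm_tmul, Finset.sum_mul]
    rw [lhs, key]
    have rhs : ∀ i ∈ r0.index, ∑ j ∈ (r2 i).index,
        (antipode (R := k) ((r2 i).left j) ⊗ₜ[k] antipode (R := k) (r0.left i)) *
          comul (R := k) ((r2 i).right j)
        = ((1:H) ⊗ₜ[k] antipode (R := k) (r0.left i)) * ((1:H) ⊗ₜ[k] r0.right i) := by
      intro i _
      have factor : ∀ j ∈ (r2 i).index,
          (antipode (R := k) ((r2 i).left j) ⊗ₜ[k] antipode (R := k) (r0.left i)) *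
            comul (R := k) ((r2 i).right j)
          = ((1:H) ⊗ₜ[k] antipode (R := k) (r0.left i)) *
              ((antipode (R := k) ((r2 i).left j) ⊗ₜ[k] (1:H)) *
                comul (R := k) ((r2 i).right j)) := by
        intro j _
        rw [← mul_assoc, Algebra.TensorProduct.tmul_mul_tmul, one_mul, mul_one]
      rw [Finset.sum_congr rfl factor, ← Finset.mul_sum, claimB (r2 i)]
    rw [Finset.sum_congr rfl rhs]
    have e2 : ∀ i ∈ r0.index,
        ((1:H) ⊗ₜ[k] antipode (R := k) (r0.left i)) * ((1:H) ⊗ₜ[k] r0.right i)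
        = (1:H) ⊗ₜ[k] (antipode (R := k) (r0.left i) * r0.right i) := by
      intro i _; rw [Algebra.TensorProduct.tmul_mul_tmul, one_mul]
    rw [Finset.sum_congr rfl e2, ← TensorProduct.tmul_sum,
      sum_antipode_mul_eq_algebraMap_counit (R := k) r0]
    rw [Algebra.algebraMap_eq_smul_one, TensorProduct.tmul_smul]
    simp [cunit, Algebra.algebraMap_eq_smul_one, Algebra.TensorProduct.one_def]
  have hfg := conv_inv_unique h1 h2
  have happ := congrArg (fun F : H →ₗ[k] H ⊗[k] H => F a) hfg
  simp only [hfdef, hgdef, comp_apply, LinearEquiv.coe_coe] at happ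
  rw [happ, ← r.eq]
  simp only [map_sum, TensorProduct.map_tmul, TensorProduct.comm_tmul]

end Antihom

section Tmsec

variable {k H : Type} [Field k] [Ring H] [HopfAlgebra k H]

/-- `T φ = (id ⊗ φ) ∘ Δ`, as a linear map in `φ`. -/
def TmL : (H →ₗ[k] k) →ₗ[k] (H →ₗ[k] H) where
  toFun φ := idTens k H φ ∘ₗ comul
  map_add' φ ψ := by
    ext a
    simp [idTens, LinearMap.lTensor_add]
  map_smul' c φ := by
    ext a
    simp [idTens, LinearMap.lTensor_smul]

lemma TmL_apply (φ : H →ₗ[k] k) (a : H) : TmL φ a = idTens k H φ (comul a) := rfl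

lemma TmL_repr (φ : H →ₗ[k] k) {a : H} {ι_r : Type*} (r : Repr k a ι_r) :
    TmL φ a = ∑ i ∈ r.index, φ (r.right i) • r.left i := by
  rw [TmL_apply, ← r.eq]
  simp [idTens]

lemma TmL_mul_repr (φ : H →ₗ[k] k) {a b : H} {ι_ra : Type*} (ra : Repr k a ι_ra) {ι_rb : Type*} (rb : Repr k b ι_rb) :
    TmL φ (a * b) = ∑ i ∈ ra.index, ∑ j ∈ rb.index,
      φ (ra.right i * rb.right j) • (ra.left i * rb.left j) := by
  rw [TmL_apply, comul_mul_repr ra rb]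
  simp [idTens, map_sum]

/-- counit of `T φ a` recovers `φ a` -/
lemma counit_TmL (φ : H →ₗ[k] k) (a : H) : counit (R := k) (TmL φ a) = φ a := by
  rw [TmL_repr φ (Repr.arbitrary k a)]
  rw [map_sum]
  simp only [map_smul, smul_eq_mul]
  calc ∑ i ∈ (Repr.arbitrary k a).index,
        φ ((Repr.arbitrary k a).right i) * counit (R := k) ((Repr.arbitrary k a).left i)
      = φ (∑ i ∈ (Repr.arbitrary k a).index,
          counit (R := k) ((Repr.arbitrary k a).left i) • (Repr.arbitrary k a).right i) := by
        rw [map_sum]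
        exact Finset.sum_congr rfl fun i _ => by rw [map_smul, smul_eq_mul, mul_comm]
    _ = φ a := by rw [sum_counit_smul']

lemma mem_leftCointegrals {g : H} {φ : H →ₗ[k] k} :
    φ ∈ leftCointegrals k H g ↔ ∀ a : H, TmL φ a = φ a • g := Iff.rfl

/-- a `Repr` for `antipode h` obtained from one of `h` -/
def antipodeRepr {h : H} {ι_rh : Type*} (rh : Repr k h ι_rh) : Repr k (antipode (R := k) h) ι_rh where
  index := rh.index
  left := fun i => antipode (R := k) (rh.right i)
  right := fun i => antipode (R := k) (rh.left i)
  eq := (comul_antipode' rh).symm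

/-- the middle-collapse identity `∑ h₁ ⊗ S(h₂)h₃ = h ⊗ 1` -/
lemma claimC {h : H} {ι_rh : Type*} (rh : Repr k h ι_rh) :
    ∑ j ∈ rh.index, ∑ p ∈ (Repr.arbitrary k (rh.left j)).index,
      (Repr.arbitrary k (rh.left j)).left p ⊗ₜ[k]
        (antipode (R := k) ((Repr.arbitrary k (rh.left j)).right p) * rh.right j)
    = h ⊗ₜ[k] (1 : H) := by
  set r1 := fun j => Repr.arbitrary k (rh.left j)
  set r2 := fun j => Repr.arbitrary k (rh.right j)
  have key := congrArg
    (LinearMap.lTensor H (LinearMap.mul' k H ∘ₗ TensorProduct.map (antipode (R := k)) LinearMap.id))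
    (sum_tmul_tmul_eq rh r1 r2)
  simp only [map_sum, LinearMap.lTensor_tmul, comp_apply, TensorProduct.map_tmul, mul'_apply,
    id_coe, _root_.id] at key
  rw [key]
  have e : ∀ j ∈ rh.index, ∑ p ∈ (r2 j).index,
      rh.left j ⊗ₜ[k] (antipode (R := k) ((r2 j).left p) * (r2 j).right p)
      = (counit (R := k) (rh.right j)) • rh.left j ⊗ₜ[k] (1:H) := by
    intro j _
    rw [← TensorProduct.tmul_sum, sum_antipode_mul_eq_algebraMap_counit (R := k) (r2 j),
      Algebra.algebraMap_eq_smul_one, TensorProduct.tmul_smul]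
  rw [Finset.sum_congr rfl e]
  simp_rw [TensorProduct.smul_tmul']
  rw [← TensorProduct.sum_tmul, sum_smul_counit']

/-- compatibility: `T(ψ·h)(x) = ∑ Tψ(x S(h₁)) h₂` -/
lemma compat (ψ : H →ₗ[k] k) (h x : H) {ι_rh : Type*} (rh : Repr k h ι_rh) :
    TmL (ψ ∘ₗ LinearMap.mulRight k (antipode (R := k) h)) x
    = ∑ j ∈ rh.index, TmL ψ (x * antipode (R := k) (rh.left j)) * rh.right j := by
  set rx := Repr.arbitrary k x
  set r1 := fun j => Repr.arbitrary k (rh.left j)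
  have rhs : ∀ j ∈ rh.index,
      TmL ψ (x * antipode (R := k) (rh.left j)) * rh.right j
      = ∑ i ∈ rx.index, ∑ p ∈ (r1 j).index,
          ψ (rx.right i * antipode (R := k) ((r1 j).left p)) •
            (rx.left i * (antipode (R := k) ((r1 j).right p) * rh.right j)) := by
    intro j _
    rw [TmL_mul_repr ψ rx (antipodeRepr (r1 j))]
    rw [Finset.sum_mul]
    refine Finset.sum_congr rfl fun i _ => ?_
    rw [Finset.sum_mul]
    refine Finset.sum_congr rfl fun p _ => ?_
    rw [smul_mul_assoc, mul_assoc]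
    rfl
  rw [Finset.sum_congr rfl rhs, Finset.sum_comm]
  have inner : ∀ i ∈ rx.index,
      ∑ j ∈ rh.index, ∑ p ∈ (r1 j).index,
        ψ (rx.right i * antipode (R := k) ((r1 j).left p)) •
          (rx.left i * (antipode (R := k) ((r1 j).right p) * rh.right j))
      = ψ (rx.right i * antipode (R := k) h) • (rx.left i * 1) := by
    intro i _
    have := congrArg
      ((TensorProduct.lid k H).toLinearMap ∘ₗ
        TensorProduct.map (ψ ∘ₗ LinearMap.mulLeft k (rx.right i) ∘ₗ antipode (R := k))
          (LinearMap.mulLeft k (rx.left i)))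
      (claimC rh)
    simpa [map_sum] using this
  rw [Finset.sum_congr rfl inner]
  rw [TmL_repr _ rx]
  simp [mul_one]

end Tmsec

section FinDim

variable {k H : Type} [Field k] [Ring H] [HopfAlgebra k H]
variable {ι : Type} [Fintype ι] [DecidableEq ι] (b : Module.Basis ι k H)
set_option linter.unusedSectionVars false

/-- the coaction components of a functional w.r.t. a basis -/
def rho (i : ι) : (H →ₗ[k] k) →ₗ[k] (H →ₗ[k] k) :=
  (LinearMap.llcomp k H H k (b.coord i)) ∘ₗ TmL

lemma rho_apply (i : ι) (φ : H →ₗ[k] k) (y : H) :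
    rho b i φ y = b.coord i (TmL φ y) := rfl

lemma sum_rho_smul (φ : H →ₗ[k] k) (y : H) :
    ∑ i, rho b i φ y • b i = TmL φ y := by
  simp only [rho_apply]
  exact b.sum_repr _

/-- comodule coassociativity, evaluated: `∑ T(φ₍₀₎)(y) ⊗ φ₍₁₎ = Δ(Tφ(y))` -/
lemma coassocL5 (φ : H →ₗ[k] k) (y : H) :
    ∑ i, (TmL (rho b i φ) y) ⊗ₜ[k] b i = comul (R := k) (TmL φ y) := by
  set ry := Repr.arbitrary k y
  set r1 := fun p => Repr.arbitrary k (ry.left p)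
  set r2 := fun p => Repr.arbitrary k (ry.right p)
  have lhs : ∑ i, (TmL (rho b i φ) y) ⊗ₜ[k] b i
      = ∑ p ∈ ry.index, ry.left p ⊗ₜ[k] TmL φ (ry.right p) := by
    calc ∑ i, (TmL (rho b i φ) y) ⊗ₜ[k] b i
        = ∑ i, ∑ p ∈ ry.index, rho b i φ (ry.right p) • (ry.left p ⊗ₜ[k] b i) := by
          refine Finset.sum_congr rfl fun i _ => ?_
          rw [TmL_repr _ ry, TensorProduct.sum_tmul]
          exact Finset.sum_congr rfl fun p _ => by rw [TensorProduct.smul_tmul']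
      _ = ∑ p ∈ ry.index, ∑ i, rho b i φ (ry.right p) • (ry.left p ⊗ₜ[k] b i) :=
          Finset.sum_comm
      _ = ∑ p ∈ ry.index, ry.left p ⊗ₜ[k] TmL φ (ry.right p) := by
          refine Finset.sum_congr rfl fun p _ => ?_
          rw [← sum_rho_smul b φ (ry.right p), TensorProduct.tmul_sum]
          exact Finset.sum_congr rfl fun i _ => by rw [TensorProduct.tmul_smul]
  rw [lhs]
  have key := congrArg
    ((TensorProduct.rid k (H ⊗[k] H)).toLinearMap ∘ₗ
      LinearMap.lTensor (H ⊗[k] H) φ ∘ₗ (TensorProduct.assoc k H H H).symm.toLinearMap)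
    (sum_tmul_tmul_eq ry r1 r2)
  simp only [map_sum, comp_apply, LinearEquiv.coe_coe, TensorProduct.assoc_symm_tmul,
    LinearMap.lTensor_tmul, TensorProduct.rid_tmul] at key
  calc ∑ p ∈ ry.index, ry.left p ⊗ₜ[k] TmL φ (ry.right p)
      = ∑ p ∈ ry.index, ∑ n ∈ (r2 p).index,
          φ ((r2 p).right n) • (ry.left p ⊗ₜ[k] (r2 p).left n) := by
        refine Finset.sum_congr rfl fun p _ => ?_
        rw [TmL_repr φ (r2 p), TensorProduct.tmul_sum]
        exact Finset.sum_congr rfl fun n _ => by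
          rw [TensorProduct.tmul_smul]
    _ = ∑ p ∈ ry.index, ∑ j ∈ (r1 p).index,
          φ (ry.right p) • ((r1 p).left j ⊗ₜ[k] (r1 p).right j) := key.symm
    _ = comul (R := k) (TmL φ y) := by
        rw [TmL_repr φ ry, map_sum]
        refine Finset.sum_congr rfl fun p _ => ?_
        rw [map_smul, ← (r1 p).eq, Finset.smul_sum]

/-- two-step coaction identity -/
lemma L8 (φ : H →ₗ[k] k) :
    ∑ i, (rho b i φ) ⊗ₜ[k] comul (R := k) (b i)
    = ∑ i, ∑ m, (rho b m (rho b i φ)) ⊗ₜ[k] ((b m : H) ⊗ₜ[k] (b i : H)) := by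
  apply (dualTensorHomEquivOfBasis (N := H ⊗[k] H) b).injective
  simp only [dualTensorHomEquivOfBasis_apply]
  simp only [map_sum]
  ext y
  simp only [LinearMap.coe_sum, Finset.sum_apply, dualTensorHom_apply]
  calc ∑ i, rho b i φ y • comul (R := k) (b i)
      = comul (R := k) (TmL φ y) := by
        rw [← sum_rho_smul b φ y, map_sum]
        exact Finset.sum_congr rfl fun i _ => by rw [map_smul]
    _ = ∑ i, (TmL (rho b i φ) y) ⊗ₜ[k] b i := (coassocL5 b φ y).symm
    _ = ∑ i, ∑ m, rho b m (rho b i φ) y • ((b m : H) ⊗ₜ[k] (b i : H)) := by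
        refine Finset.sum_congr rfl fun i _ => ?_
        rw [← sum_rho_smul b (rho b i φ) y, TensorProduct.sum_tmul]
        exact Finset.sum_congr rfl fun m _ => by rw [TensorProduct.smul_tmul']

/-- the projection `P` onto coinvariants -/
def PL : (H →ₗ[k] k) →ₗ[k] (H →ₗ[k] k) :=
  ∑ i, (LinearMap.lcomp k k
    (LinearMap.mulRight k (antipode (R := k) (antipode (R := k) (b i))))) ∘ₗ rho b i

lemma PL_apply (φ : H →ₗ[k] k) (x : H) :
    PL b φ x = ∑ i, rho b i φ (x * antipode (R := k) (antipode (R := k) (b i))) := by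
  simp [PL, LinearMap.sum_apply]

/-- evaluation map -/
def evalAH : ((H →ₗ[k] H) ⊗[k] H) →ₗ[k] H := TensorProduct.lift LinearMap.id
def evalAk : ((H →ₗ[k] k) ⊗[k] H) →ₗ[k] k := TensorProduct.lift LinearMap.id

/-- the contraction `ψ ⊗ (v ⊗ w) ↦ Tψ(x·S²w)·S(v)` -/
def Qhat (x : H) : ((H →ₗ[k] k) ⊗[k] (H ⊗[k] H)) →ₗ[k] H :=
  LinearMap.mul' k H ∘ₗ
    TensorProduct.map
      (evalAH ∘ₗ TensorProduct.map TmL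
        (LinearMap.mulLeft k x ∘ₗ antipode (R := k) ∘ₗ antipode (R := k)))
      (antipode (R := k)) ∘ₗ
    (TensorProduct.assoc k (H →ₗ[k] k) H H).symm.toLinearMap ∘ₗ
    LinearMap.lTensor (H →ₗ[k] k) (TensorProduct.comm k H H).toLinearMap

lemma Qhat_tmul (x : H) (ψ : H →ₗ[k] k) (v w : H) :
    Qhat x (ψ ⊗ₜ[k] (v ⊗ₜ[k] w))
    = TmL ψ (x * antipode (R := k) (antipode (R := k) w)) * antipode (R := k) v := by
  simp [Qhat, evalAH]

/-- the contraction `ψ ⊗ (v ⊗ w) ↦ ψ(x·(S(w)·S²(v)))` -/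
def Rhat (x : H) : ((H →ₗ[k] k) ⊗[k] (H ⊗[k] H)) →ₗ[k] k :=
  evalAk ∘ₗ LinearMap.lTensor (H →ₗ[k] k)
    (LinearMap.mulLeft k x ∘ₗ LinearMap.mul' k H ∘ₗ
      TensorProduct.map (antipode (R := k)) (antipode (R := k) ∘ₗ antipode (R := k)) ∘ₗ
      (TensorProduct.comm k H H).toLinearMap)

lemma Rhat_tmul (x : H) (ψ : H →ₗ[k] k) (v w : H) :
    Rhat x (ψ ⊗ₜ[k] (v ⊗ₜ[k] w))
    = ψ (x * (antipode (R := k) w * antipode (R := k) (antipode (R := k) v))) := by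
  simp [Rhat, evalAk]

/-- Obligation II : `P φ` is a left cointegral. -/
lemma PL_mem (φ : H →ₗ[k] k) : PL b φ ∈ leftCointegrals k H 1 := by
  rw [mem_leftCointegrals]
  intro x
  have expand : TmL (PL b φ) x
      = ∑ i, TmL ((rho b i φ) ∘ₗ LinearMap.mulRight k
          (antipode (R := k) (antipode (R := k) (b i)))) x := by
    rw [PL, LinearMap.sum_apply, map_sum, LinearMap.sum_apply]
    rfl
  have step2 : ∀ i, TmL ((rho b i φ) ∘ₗ LinearMap.mulRight k
        (antipode (R := k) (antipode (R := k) (b i)))) x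
      = ∑ j ∈ (Repr.arbitrary k (b i)).index,
          TmL (rho b i φ)
            (x * antipode (R := k) (antipode (R := k) ((Repr.arbitrary k (b i)).right j))) *
          antipode (R := k) ((Repr.arbitrary k (b i)).left j) := by
    intro i
    exact compat (rho b i φ) _ x (antipodeRepr (Repr.arbitrary k (b i)))
  have key8 := congrArg (Qhat x) (L8 b φ)
  simp only [map_sum] at key8
  have lhs8 : ∀ i, Qhat x ((rho b i φ) ⊗ₜ[k] comul (R := k) (b i))
      = ∑ j ∈ (Repr.arbitrary k (b i)).index,
          TmL (rho b i φ)
            (x * antipode (R := k) (antipode (R := k) ((Repr.arbitrary k (b i)).right j))) *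
          antipode (R := k) ((Repr.arbitrary k (b i)).left j) := by
    intro i
    rw [← (Repr.arbitrary k (b i)).eq, TensorProduct.tmul_sum, map_sum]
    exact Finset.sum_congr rfl fun j _ => Qhat_tmul x _ _ _
  have rhs8 : ∀ i, ∑ m, Qhat x ((rho b m (rho b i φ)) ⊗ₜ[k] ((b m : H) ⊗ₜ[k] (b i : H)))
      = (rho b i φ) (x * antipode (R := k) (antipode (R := k) (b i))) • 1 := by
    intro i
    set y := x * antipode (R := k) (antipode (R := k) (b i))
    have e : ∀ m, Qhat x ((rho b m (rho b i φ)) ⊗ₜ[k] ((b m : H) ⊗ₜ[k] (b i : H)))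
        = TmL (rho b m (rho b i φ)) y * antipode (R := k) (b m) :=
      fun m => Qhat_tmul x _ _ _
    rw [Finset.sum_congr rfl (fun m _ => e m)]
    have key5 := congrArg (LinearMap.mul' k H ∘ₗ
      TensorProduct.map LinearMap.id (antipode (R := k))) (coassocL5 b (rho b i φ) y)
    simp only [map_sum, comp_apply, TensorProduct.map_tmul, mul'_apply, id_coe, _root_.id]
      at key5
    rw [key5]
    set z := TmL (rho b i φ) y with hz
    have hsum := sum_mul_antipode_eq_algebraMap_counit (R := k) (Repr.arbitrary k z)
    rw [← (Repr.arbitrary k z).eq, map_sum, map_sum]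
    simp only [TensorProduct.map_tmul, mul'_apply, id_coe, _root_.id]
    rw [hsum, hz, counit_TmL, Algebra.algebraMap_eq_smul_one]
  calc TmL (PL b φ) x
      = ∑ i, Qhat x ((rho b i φ) ⊗ₜ[k] comul (R := k) (b i)) := by
        rw [expand, Finset.sum_congr rfl (fun i _ => step2 i)]
        exact (Finset.sum_congr rfl (fun i _ => lhs8 i)).symm
    _ = ∑ i, ∑ m, Qhat x ((rho b m (rho b i φ)) ⊗ₜ[k] ((b m : H) ⊗ₜ[k] (b i : H))) := key8
    _ = ∑ i, (rho b i φ) (x * antipode (R := k) (antipode (R := k) (b i))) • 1 :=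
        Finset.sum_congr rfl (fun i _ => rhs8 i)
    _ = PL b φ x • 1 := by rw [PL_apply, Finset.sum_smul]

/-- Obligation IV: `β ∘ γ = id`, pointwise form -/
lemma betaGamma_pointwise (φ : H →ₗ[k] k) :
    ∑ i, (PL b (rho b i φ)) ∘ₗ LinearMap.mulRight k (antipode (R := k) (b i)) = φ := by
  ext x
  simp only [LinearMap.coe_sum, Finset.sum_apply, comp_apply, mulRight_apply]
  have key8 := congrArg (Rhat x) (L8 b φ)
  simp only [map_sum] at key8
  have lhs8 : ∀ i, Rhat x ((rho b i φ) ⊗ₜ[k] comul (R := k) (b i))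
      = counit (R := k) (b i) • (rho b i φ) x := by
    intro i
    rw [← (Repr.arbitrary k (b i)).eq, TensorProduct.tmul_sum, map_sum]
    have e : ∀ j ∈ (Repr.arbitrary k (b i)).index,
        Rhat x ((rho b i φ) ⊗ₜ[k]
          ((Repr.arbitrary k (b i)).left j ⊗ₜ[k] (Repr.arbitrary k (b i)).right j))
        = (rho b i φ) (x * antipode (R := k)
            (antipode (R := k) ((Repr.arbitrary k (b i)).left j) *
              (Repr.arbitrary k (b i)).right j)) := by
      intro j _
      rw [Rhat_tmul, antipode_mul']
    rw [Finset.sum_congr rfl e]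
    calc ∑ j ∈ (Repr.arbitrary k (b i)).index,
          (rho b i φ) (x * antipode (R := k)
            (antipode (R := k) ((Repr.arbitrary k (b i)).left j) *
              (Repr.arbitrary k (b i)).right j))
        = (rho b i φ) (x * antipode (R := k)
            (∑ j ∈ (Repr.arbitrary k (b i)).index,
              antipode (R := k) ((Repr.arbitrary k (b i)).left j) *
                (Repr.arbitrary k (b i)).right j)) := by
          rw [map_sum, Finset.mul_sum, map_sum]
      _ = counit (R := k) (b i) • (rho b i φ) x := by
          rw [sum_antipode_mul_eq_algebraMap_counit (R := k) (Repr.arbitrary k (b i)),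
            Algebra.algebraMap_eq_smul_one, map_smul, antipode_one', mul_smul_comm,
            mul_one, map_smul, smul_eq_mul]
  have rhs8 : ∀ i m, Rhat x ((rho b m (rho b i φ)) ⊗ₜ[k] ((b m : H) ⊗ₜ[k] (b i : H)))
      = rho b m (rho b i φ) (x * antipode (R := k) (b i) *
          antipode (R := k) (antipode (R := k) (b m))) := by
    intro i m
    rw [Rhat_tmul, mul_assoc]
  calc ∑ i, PL b (rho b i φ) (x * antipode (R := k) (b i))
      = ∑ i, ∑ m, Rhat x ((rho b m (rho b i φ)) ⊗ₜ[k] ((b m : H) ⊗ₜ[k] (b i : H))) := by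
        refine Finset.sum_congr rfl fun i _ => ?_
        rw [PL_apply]
        exact Finset.sum_congr rfl fun m _ => (rhs8 i m).symm
    _ = ∑ i, Rhat x ((rho b i φ) ⊗ₜ[k] comul (R := k) (b i)) := key8.symm
    _ = ∑ i, counit (R := k) (b i) • (rho b i φ) x :=
        Finset.sum_congr rfl fun i _ => lhs8 i
    _ = φ x := by
        have := congrArg (counit (R := k)) (sum_rho_smul b φ x)
        rw [map_sum, counit_TmL] at this
        rw [← this]
        exact Finset.sum_congr rfl fun i _ => by
          rw [map_smul, smul_eq_mul, smul_eq_mul, mul_comm]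

/-- switching representation of the coaction of an acted cointegral -/
lemma repSwitch {w : H →ₗ[k] k} (hw : w ∈ leftCointegrals k H 1) (h : H) {ι_rh : Type*} (rh : Repr k h ι_rh) :
    ∑ i, (rho b i (w ∘ₗ LinearMap.mulRight k (antipode (R := k) h))) ⊗ₜ[k] b i
    = ∑ j ∈ rh.index,
        (w ∘ₗ LinearMap.mulRight k (antipode (R := k) (rh.left j))) ⊗ₜ[k] rh.right j := by
  apply (dualTensorHomEquivOfBasis (N := H) b).injective
  simp only [dualTensorHomEquivOfBasis_apply]
  simp only [map_sum]
  ext y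
  simp only [LinearMap.coe_sum, Finset.sum_apply, dualTensorHom_apply]
  have hmem := (mem_leftCointegrals (g := (1:H))).mp hw
  calc ∑ i, rho b i (w ∘ₗ LinearMap.mulRight k (antipode (R := k) h)) y • b i
      = TmL (w ∘ₗ LinearMap.mulRight k (antipode (R := k) h)) y := sum_rho_smul b _ y
    _ = ∑ j ∈ rh.index, TmL w (y * antipode (R := k) (rh.left j)) * rh.right j :=
        compat w h y rh
    _ = ∑ j ∈ rh.index,
          (w ∘ₗ LinearMap.mulRight k (antipode (R := k) (rh.left j))) y • rh.right j := by
        refine Finset.sum_congr rfl fun j _ => ?_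
        rw [hmem (y * antipode (R := k) (rh.left j)), smul_mul_assoc, one_mul]
        rfl

/-- the action-by-`S∘S` contraction -/
def Lambda : ((H →ₗ[k] k) ⊗[k] H) →ₗ[k] (H →ₗ[k] k) :=
  TensorProduct.lift ((LinearMap.llcomp k H H k).compl₂
    (((LinearMap.mul k H).flip) ∘ₗ (antipode (R := k) ∘ₗ antipode (R := k))))

lemma Lambda_tmul (ψ : H →ₗ[k] k) (u : H) :
    Lambda (ψ ⊗ₜ[k] u) = ψ ∘ₗ LinearMap.mulRight k (antipode (R := k) (antipode (R := k) u)) := by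
  ext x
  simp [Lambda, mulRight_apply, LinearMap.mul_apply']

lemma PL_as_Lambda (ψ : H →ₗ[k] k) :
    PL b ψ = Lambda (∑ i, (rho b i ψ) ⊗ₜ[k] b i) := by
  rw [map_sum, PL, LinearMap.sum_apply]
  exact Finset.sum_congr rfl fun i _ => by rw [Lambda_tmul]; rfl

/-- Obligation IIb : `P(w·h) = ε(h)w` for cointegrals `w` -/
lemma PL_action {w : H →ₗ[k] k} (hw : w ∈ leftCointegrals k H 1) (h : H) {ι_rh : Type*} (rh : Repr k h ι_rh) :
    PL b (w ∘ₗ LinearMap.mulRight k (antipode (R := k) h)) = counit (R := k) h • w := by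
  rw [PL_as_Lambda, repSwitch b hw h rh, map_sum]
  ext x
  simp only [LinearMap.coe_sum, Finset.sum_apply, Lambda_tmul, comp_apply,
    mulRight_apply, LinearMap.smul_apply]
  have e : ∀ j ∈ rh.index,
      w (x * antipode (R := k) (antipode (R := k) (rh.right j)) * antipode (R := k) (rh.left j))
      = w (x * antipode (R := k) (rh.left j * antipode (R := k) (rh.right j))) := by
    intro j _
    rw [mul_assoc, ← antipode_mul']
  rw [Finset.sum_congr rfl e]
  calc ∑ j ∈ rh.index, w (x * antipode (R := k) (rh.left j * antipode (R := k) (rh.right j)))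
      = w (x * antipode (R := k)
          (∑ j ∈ rh.index, rh.left j * antipode (R := k) (rh.right j))) := by
        rw [map_sum, Finset.mul_sum, map_sum]
    _ = counit (R := k) h • w x := by
        rw [sum_mul_antipode_eq_algebraMap_counit (R := k) rh, Algebra.algebraMap_eq_smul_one, map_smul,
          antipode_one', mul_smul_comm, mul_one, map_smul]

/-- the map `L ⊗ H → H*`, `w ⊗ h ↦ w(· S(h))` -/
def betaMap : ((leftCointegrals k H 1) ⊗[k] H) →ₗ[k] (H →ₗ[k] k) :=
  TensorProduct.lift ((LinearMap.llcomp k H H k ∘ₗ (leftCointegrals k H 1).subtype).compl₂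
    (((LinearMap.mul k H).flip) ∘ₗ antipode (R := k)))

lemma betaMap_tmul (w : leftCointegrals k H 1) (h : H) :
    betaMap (w ⊗ₜ[k] h) = (w : H →ₗ[k] k) ∘ₗ LinearMap.mulRight k (antipode (R := k) h) := by
  ext x
  simp [betaMap, mulRight_apply, LinearMap.mul_apply']

/-- the map `H* → L ⊗ H`, `φ ↦ ∑ P(φ₍₀₎) ⊗ φ₍₁₎` -/
def gammaMap : (H →ₗ[k] k) →ₗ[k] ((leftCointegrals k H 1) ⊗[k] H) :=
  ∑ i, ((TensorProduct.mk k (leftCointegrals k H 1) H).flip (b i)) ∘ₗ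
    (LinearMap.codRestrict (leftCointegrals k H 1) (PL b) (PL_mem b)) ∘ₗ rho b i

lemma beta_gamma : betaMap ∘ₗ gammaMap b = LinearMap.id := by
  refine LinearMap.ext fun φ => ?_
  simp only [comp_apply, id_coe, _root_.id, gammaMap, LinearMap.sum_apply, map_sum]
  have e : ∀ i, betaMap
      (((TensorProduct.mk k (leftCointegrals k H 1) H).flip (b i))
        ((LinearMap.codRestrict (leftCointegrals k H 1) (PL b) (PL_mem b)) (rho b i φ)))
      = (PL b (rho b i φ)) ∘ₗ LinearMap.mulRight k (antipode (R := k) (b i)) := by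
    intro i
    rw [show (((TensorProduct.mk k (leftCointegrals k H 1) H).flip (b i))
        ((LinearMap.codRestrict (leftCointegrals k H 1) (PL b) (PL_mem b)) (rho b i φ)))
      = ((LinearMap.codRestrict (leftCointegrals k H 1) (PL b) (PL_mem b)) (rho b i φ))
          ⊗ₜ[k] b i from rfl, betaMap_tmul]
    congr 1
  rw [Finset.sum_congr rfl (fun i _ => e i)]
  exact betaGamma_pointwise b φ

lemma gamma_beta : gammaMap b ∘ₗ betaMap = LinearMap.id := by
  apply TensorProduct.ext'
  intro w h
  have inj : Function.Injective ((leftCointegrals k H 1).subtype.rTensor H) :=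
    Module.Flat.rTensor_preserves_injective_linearMap _ (Submodule.injective_subtype _)
  apply inj
  have key := congrArg (LinearMap.rTensor H (PL b)) (repSwitch b w.2 h (Repr.arbitrary k h))
  simp only [map_sum, LinearMap.rTensor_tmul] at key
  calc ((leftCointegrals k H 1).subtype.rTensor H)
        ((gammaMap b ∘ₗ betaMap) (w ⊗ₜ[k] h))
      = ∑ i, (PL b (rho b i ((w : H →ₗ[k] k) ∘ₗ
          LinearMap.mulRight k (antipode (R := k) h)))) ⊗ₜ[k] b i := by
        rw [comp_apply, betaMap_tmul, gammaMap, LinearMap.sum_apply, map_sum]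
        rfl
    _ = ∑ j ∈ (Repr.arbitrary k h).index,
          (PL b ((w : H →ₗ[k] k) ∘ₗ LinearMap.mulRight k
            (antipode (R := k) ((Repr.arbitrary k h).left j)))) ⊗ₜ[k]
              (Repr.arbitrary k h).right j := key
    _ = ((leftCointegrals k H 1).subtype.rTensor H) (LinearMap.id (w ⊗ₜ[k] h)) := by
        have e : ∀ j ∈ (Repr.arbitrary k h).index,
            (PL b ((w : H →ₗ[k] k) ∘ₗ LinearMap.mulRight k
              (antipode (R := k) ((Repr.arbitrary k h).left j)))) ⊗ₜ[k]
                (Repr.arbitrary k h).right j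
            = (w : H →ₗ[k] k) ⊗ₜ[k]
                (counit (R := k) ((Repr.arbitrary k h).left j) •
                  (Repr.arbitrary k h).right j) := by
          intro j _
          rw [PL_action b w.2 _ (Repr.arbitrary k ((Repr.arbitrary k h).left j)),
            TensorProduct.smul_tmul]
        rw [Finset.sum_congr rfl e, ← TensorProduct.tmul_sum, sum_counit_smul']
        rfl

/-- the fundamental isomorphism `L ⊗ H ≅ H*` -/
def mainEquiv : ((leftCointegrals k H 1) ⊗[k] H) ≃ₗ[k] (H →ₗ[k] k) :=
  LinearEquiv.ofLinear betaMap (gammaMap b) (beta_gamma b) (gamma_beta b)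

end FinDim

section Grouplike

variable {k H : Type} [Field k] [Ring H] [HopfAlgebra k H] {g : H}

def grpRepr (hg : IsGrouplike k H g) : Repr k g ℕ where
  index := ({0} : Finset ℕ)
  left := fun _ => g
  right := fun _ => g
  eq := by simpa using hg.1.symm

lemma g_mul_Sg (hg : IsGrouplike k H g) : g * antipode (R := k) g = 1 := by
  have h := mul_antipode_lTensor_comul_apply (R := k) (a := g)
  rw [hg.1] at h
  simpa [hg.2] using h

lemma Sg_mul_g (hg : IsGrouplike k H g) : antipode (R := k) g * g = 1 := by
  have h := mul_antipode_rTensor_comul_apply (R := k) (a := g)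
  rw [hg.1] at h
  simpa [hg.2] using h

lemma comul_Sg (hg : IsGrouplike k H g) :
    comul (R := k) (antipode (R := k) g) = antipode (R := k) g ⊗ₜ[k] antipode (R := k) g := by
  have := comul_antipode' (grpRepr hg)
  simpa [grpRepr] using this

def SgRepr (hg : IsGrouplike k H g) : Repr k (antipode (R := k) g) ℕ where
  index := ({0} : Finset ℕ)
  left := fun _ => antipode (R := k) g
  right := fun _ => antipode (R := k) g
  eq := by simpa using (comul_Sg hg).symm

lemma mem_L1_of_mem_Lg (hg : IsGrouplike k H g) {φ : H →ₗ[k] k}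
    (hφ : φ ∈ leftCointegrals k H g) :
    φ ∘ₗ LinearMap.mulRight k g ∈ leftCointegrals k H 1 := by
  have hφ' := (mem_leftCointegrals (g := g)).mp hφ
  rw [mem_leftCointegrals]
  intro x
  have expand : TmL φ (x * g) = TmL (φ ∘ₗ LinearMap.mulRight k g) x * g := by
    rw [TmL_mul_repr φ (Repr.arbitrary k x) (grpRepr hg), TmL_repr _ (Repr.arbitrary k x),
      Finset.sum_mul]
    simp [grpRepr, smul_mul_assoc, mulRight_apply]
  have h2 : TmL (φ ∘ₗ LinearMap.mulRight k g) x * g = φ (x * g) • g := by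
    rw [← expand]; exact hφ' (x * g)
  have h3 := congrArg (· * antipode (R := k) g) h2
  simp only [mul_assoc, g_mul_Sg hg, mul_one, smul_mul_assoc] at h3
  rw [h3]
  rfl

lemma mem_Lg_of_mem_L1 (hg : IsGrouplike k H g) {ψ : H →ₗ[k] k}
    (hψ : ψ ∈ leftCointegrals k H 1) :
    ψ ∘ₗ LinearMap.mulRight k (antipode (R := k) g) ∈ leftCointegrals k H g := by
  have hψ' := (mem_leftCointegrals (g := (1:H))).mp hψ
  rw [mem_leftCointegrals]
  intro x
  have expand : TmL ψ (x * antipode (R := k) g)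
      = TmL (ψ ∘ₗ LinearMap.mulRight k (antipode (R := k) g)) x * antipode (R := k) g := by
    rw [TmL_mul_repr ψ (Repr.arbitrary k x) (SgRepr hg), TmL_repr _ (Repr.arbitrary k x),
      Finset.sum_mul]
    simp [SgRepr, smul_mul_assoc, mulRight_apply]
  have h2 : TmL (ψ ∘ₗ LinearMap.mulRight k (antipode (R := k) g)) x * antipode (R := k) g
      = ψ (x * antipode (R := k) g) • 1 := by
    rw [← expand]; exact hψ' (x * antipode (R := k) g)
  have h3 := congrArg (· * g) h2
  simp only [mul_assoc, Sg_mul_g hg, mul_one, smul_mul_assoc, one_mul] at h3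
  rw [h3]
  rfl

/-- twisting by the grouplike `g` identifies `L_g` with `L_1` -/
def LgEquiv (hg : IsGrouplike k H g) :
    (leftCointegrals k H g) ≃ₗ[k] (leftCointegrals k H 1) := by
  refine LinearEquiv.ofLinear
    (LinearMap.codRestrict _
      ((LinearMap.lcomp k k (LinearMap.mulRight k g)) ∘ₗ (leftCointegrals k H g).subtype)
      (fun φ => mem_L1_of_mem_Lg hg φ.2))
    (LinearMap.codRestrict _
      ((LinearMap.lcomp k k (LinearMap.mulRight k (antipode (R := k) g))) ∘ₗ
        (leftCointegrals k H 1).subtype)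
      (fun ψ => mem_Lg_of_mem_L1 hg ψ.2)) ?_ ?_
  · refine LinearMap.ext fun ψ => Subtype.ext (LinearMap.ext fun x => ?_)
    simp only [comp_apply, LinearMap.codRestrict_apply, LinearMap.lcomp_apply,
      Submodule.coe_subtype, mulRight_apply, id_coe, _root_.id]
    show ψ.1 (x * g * antipode (R := k) g) = ψ.1 x
    rw [mul_assoc, g_mul_Sg hg, mul_one]
  · refine LinearMap.ext fun φ => Subtype.ext (LinearMap.ext fun x => ?_)
    simp only [comp_apply, LinearMap.codRestrict_apply, LinearMap.lcomp_apply,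
      Submodule.coe_subtype, mulRight_apply, id_coe, _root_.id]
    show φ.1 (x * antipode (R := k) g * g) = φ.1 x
    rw [mul_assoc, Sg_mul_g hg, mul_one]

end Grouplike

end LS

theorem stmt6 (k H : Type) [Field k] [Ring H] [HopfAlgebra k H] [Module.Finite k H]
    (g : H) (hg : IsGrouplike k H g) :
    Module.finrank k (leftCointegrals k H g) = 1 := by
  have hnt : Nontrivial H := by
    refine nontrivial_of_ne g 0 fun h0 => ?_
    exact one_ne_zero (by rw [← hg.2, h0, map_zero])
  have hn : 0 < Module.finrank k H := Module.finrank_pos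
  let b := Module.finBasis k H
  have e1 : Module.finrank k ((leftCointegrals k H 1) ⊗[k] H)
      = Module.finrank k (H →ₗ[k] k) := (LS.mainEquiv b).finrank_eq
  haveI : Module.Free k (leftCointegrals k H 1) := by
    exact Module.Free.of_divisionRing k (leftCointegrals k H 1)
  rw [Module.finrank_tensorProduct, Module.finrank_linearMap, Module.finrank_self, mul_one]
    at e1
  have e2 : Module.finrank k (leftCointegrals k H g)
      = Module.finrank k (leftCointegrals k H 1) := (LS.LgEquiv hg).finrank_eq
  rw [e2]
  exact Nat.eq_of_mul_eq_mul_right hn (by rw [e1, one_mul])
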